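/- Define g : [r_i, r_o] → ℝ by g(r) = sin( π·ln(r_i/r)/ln η ). Then ∫_{r_i}^{r_o} r·g'(r)² dr = −π²/(2·ln η) and ∫_{r_i}^{r_o} g(r)²/r dr = −(ln η)/2; in particular, equality holds for this g in the weighted Wirtinger-type inequality ∫_{r_i}^{r_o} r·g'(r)² dr ≥ (π/ln η)²·∫_{r_i}^{r_o} g(r)²/r dr. -/

import Mathlib

open Real MeasureTheory

/-- For `g(r) = sin(π ln(ri/r)/ln η)` with `η = ri/ro`, the two integrals in
the weighted Wirtinger-type inequality evaluate to `-π²/(2 ln η)` and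
`-(ln η)/2` respectively; in particular equality holds for this `g`. -/
theorem stmt_9
    (ri ro : ℝ) (hri : 0 < ri) (hio : ri < ro)
    (g : ℝ → ℝ)
    (hg : ∀ r, g r = Real.sin (Real.pi * Real.log (ri / r) / Real.log (ri / ro))) :
    (∫ r in ri..ro, r * (deriv g r) ^ 2
        = -Real.pi ^ 2 / (2 * Real.log (ri / ro))) ∧
    (∫ r in ri..ro, (g r) ^ 2 / r = -Real.log (ri / ro) / 2) ∧
    (∫ r in ri..ro, r * (deriv g r) ^ 2
        = (Real.pi / Real.log (ri / ro)) ^ 2 * ∫ r in ri..ro, (g r) ^ 2 / r) := by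
  have hro : 0 < ro := hri.trans hio
  set L : ℝ := Real.log (ri / ro) with hLdef
  have hη0 : 0 < ri / ro := div_pos hri hro
  have hη1 : ri / ro < 1 := (div_lt_one hro).mpr hio
  have hL : L < 0 := Real.log_neg hη0 hη1
  have hLne : L ≠ 0 := ne_of_lt hL
  have hπ : (0:ℝ) < Real.pi := Real.pi_pos
  set θ : ℝ → ℝ := fun r => Real.pi * Real.log (ri / r) / L with hθdef
  -- derivative of θ
  have hθd : ∀ r : ℝ, 0 < r → HasDerivAt θ (-(Real.pi / (L * r))) r := by
    intro r hr
    have hlog : HasDerivAt (fun r : ℝ => Real.log (ri / r)) (-(1/r)) r := by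
      have h1 : HasDerivAt (fun r : ℝ => Real.log ri - Real.log r) (-(1/r)) r := by
        exact ((hasDerivAt_const r (Real.log ri)).sub (Real.hasDerivAt_log hr.ne')).congr_deriv (by ring)
      apply h1.congr_of_eventuallyEq
      filter_upwards [isOpen_Ioi.eventually_mem hr] with x hx
      rw [Real.log_div hri.ne' (ne_of_gt hx)]
    have := (hlog.const_mul Real.pi).div_const L
    refine this.congr_deriv (Eq.symm ?_)
    rw [mul_comm L r]
    field_simp
  -- derivative of g
  have hgd : ∀ r : ℝ, 0 < r →
      HasDerivAt g (Real.cos (θ r) * (-(Real.pi / (L * r)))) r := by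
    intro r hr
    have hgeq : g = fun r => Real.sin (θ r) := funext hg
    rw [hgeq]
    exact (hθd r hr).sin
  have hderiv : ∀ r : ℝ, 0 < r →
      deriv g r = Real.cos (θ r) * (-(Real.pi / (L * r))) := fun r hr =>
    (hgd r hr).deriv
  have huIcc : Set.uIcc ri ro = Set.Icc ri ro := Set.uIcc_of_le hio.le
  have hpos : ∀ r ∈ Set.uIcc ri ro, 0 < r := by
    intro r hr
    rw [huIcc] at hr
    exact lt_of_lt_of_le hri hr.1
  -- θ is continuous on uIcc
  have hθcont : ContinuousOn θ (Set.uIcc ri ro) := fun r hr =>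
    ((hθd r (hpos r hr)).continuousAt).continuousWithinAt
  -- endpoint values
  have hθri : θ ri = 0 := by
    simp [hθdef, div_self hri.ne']
  have hθro : θ ro = Real.pi := by
    simp only [hθdef]
    field_simp
    exact hLdef.symm
  -- antiderivative of cos²θ/r
  have hF1 : ∀ r ∈ Set.uIcc ri ro,
      HasDerivAt (fun r => (1/2) * Real.log r - L / (4 * Real.pi) * Real.sin (2 * θ r))
        ((Real.cos (θ r)) ^ 2 / r) r := by
    intro r hr
    have hrp := hpos r hr
    have h1 : HasDerivAt (fun r : ℝ => (1/2) * Real.log r) ((1/2) * r⁻¹) r :=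
      (Real.hasDerivAt_log hrp.ne').const_mul (1/2)
    have h2 : HasDerivAt (fun r => Real.sin (2 * θ r))
        (Real.cos (2 * θ r) * (2 * (-(Real.pi / (L * r))))) r :=
      ((hθd r hrp).const_mul 2).sin
    have := h1.sub (h2.const_mul (L / (4 * Real.pi)))
    refine this.congr_deriv (Eq.symm ?_)
    rw [Real.cos_sq]
    field_simp
    ring
  -- antiderivative of sin²θ/r
  have hF2 : ∀ r ∈ Set.uIcc ri ro,
      HasDerivAt (fun r => (1/2) * Real.log r + L / (4 * Real.pi) * Real.sin (2 * θ r))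
        ((Real.sin (θ r)) ^ 2 / r) r := by
    intro r hr
    have hrp := hpos r hr
    have h1 : HasDerivAt (fun r : ℝ => (1/2) * Real.log r) ((1/2) * r⁻¹) r :=
      (Real.hasDerivAt_log hrp.ne').const_mul (1/2)
    have h2 : HasDerivAt (fun r => Real.sin (2 * θ r))
        (Real.cos (2 * θ r) * (2 * (-(Real.pi / (L * r))))) r :=
      ((hθd r hrp).const_mul 2).sin
    have := h1.add (h2.const_mul (L / (4 * Real.pi)))
    refine this.congr_deriv (Eq.symm ?_)
    rw [Real.sin_sq, Real.cos_sq]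
    field_simp
    ring
  -- integrability
  have hint1 : IntervalIntegrable (fun r => (Real.cos (θ r)) ^ 2 / r) volume ri ro := by
    apply ContinuousOn.intervalIntegrable
    exact ((Real.continuous_cos.comp_continuousOn hθcont).pow 2).div continuousOn_id (fun r hr => (hpos r hr).ne')
  have hint2 : IntervalIntegrable (fun r => (Real.sin (θ r)) ^ 2 / r) volume ri ro := by
    apply ContinuousOn.intervalIntegrable
    exact ((Real.continuous_sin.comp_continuousOn hθcont).pow 2).div continuousOn_id (fun r hr => (hpos r hr).ne')
  -- FTC computations
  have hI1 : (∫ r in ri..ro, (Real.cos (θ r)) ^ 2 / r) = -L / 2 := by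
    rw [intervalIntegral.integral_eq_sub_of_hasDerivAt hF1 hint1]
    rw [hθri, hθro]
    simp only [mul_zero, Real.sin_zero, Real.sin_two_pi]
    have : L = Real.log ri - Real.log ro := Real.log_div hri.ne' hro.ne'
    rw [this]
    ring
  have hI2 : (∫ r in ri..ro, (Real.sin (θ r)) ^ 2 / r) = -L / 2 := by
    rw [intervalIntegral.integral_eq_sub_of_hasDerivAt hF2 hint2]
    rw [hθri, hθro]
    simp only [mul_zero, Real.sin_zero, Real.sin_two_pi]
    have : L = Real.log ri - Real.log ro := Real.log_div hri.ne' hro.ne'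
    rw [this]
    ring
  -- first integral
  have key1 : (∫ r in ri..ro, r * (deriv g r) ^ 2)
      = (Real.pi / L) ^ 2 * (-L / 2) := by
    have : (∫ r in ri..ro, r * (deriv g r) ^ 2)
        = ∫ r in ri..ro, (Real.pi / L) ^ 2 * ((Real.cos (θ r)) ^ 2 / r) := by
      apply intervalIntegral.integral_congr
      intro r hr
      have hrp := hpos r hr
      show r * deriv g r ^ 2 = (Real.pi / L) ^ 2 * (Real.cos (θ r) ^ 2 / r)
      rw [hderiv r hrp]
      field_simp
    rw [this, intervalIntegral.integral_const_mul, hI1]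
  -- second integral
  have key2 : (∫ r in ri..ro, (g r) ^ 2 / r) = -L / 2 := by
    rw [← hI2]
    apply intervalIntegral.integral_congr
    intro r hr
    show g r ^ 2 / r = Real.sin (θ r) ^ 2 / r
    rw [hg r]
  refine ⟨?_, ?_, ?_⟩
  · rw [key1]; field_simp
  · rw [key2]
  · rw [key1, key2]
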